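/- Let $X = \{y^p - x^q = 0\} \subset (\mathbb{C}^2,0)$ with $p, q \geq 2$ coprime, and let $\mathcal{F}$ be the foliation defined by $\omega = \lambda x\,dy + y\,dx$ with $\lambda \in \mathbb{C}$, $\lambda \neq -p/q$ and $\lambda \neq 0$. Then the Bruce-Roberts number $\mu_{BR}(\mathcal{F},X) = \dim_{\mathbb{C}} \mathcal{O}_2/\omega(\Theta_X)$ equals $p + q$. -/

import Mathlib

noncomputable section

/-- Model of the ring of germs of holomorphic functions at `0 ∈ ℂⁿ`
(formal power series model). -/
abbrev On (n : ℕ) : Type := MvPowerSeries (Fin n) ℂ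

/-- Formal partial derivative `∂/∂xᵢ` on `On n`. -/
def pd {n : ℕ} (i : Fin n) (f : On n) : On n :=
  fun e => ((e i : ℂ) + 1) * MvPowerSeries.coeff (R := ℂ) (e + Finsupp.single i 1) f

/-- Evaluation of the 1-form with coefficients `A` on a vector field `ξ`:
`ω(ξ) = ∑ Aᵢ ξᵢ`. -/
def ev {n : ℕ} (A : Fin n → On n) : (Fin n → On n) →ₗ[On n] On n :=
  Fintype.linearCombination (On n) A

/-- The module `Θ_X` of vector fields tangent to the hypersurface `X = {φ = 0}`:
those `ξ` with `dφ(ξ) ∈ ⟨φ⟩`. -/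
def ThetaX {n : ℕ} (φ : On n) : Submodule (On n) (Fin n → On n) :=
  Submodule.comap (ev fun i => pd i φ) (Ideal.span {φ})

/-- The submodule `Θ_X^T` of trivial logarithmic vector fields of `X = {φ = 0}`. -/
def ThetaXT {n : ℕ} (φ : On n) : Submodule (On n) (Fin n → On n) :=
  Submodule.span (On n)
    ((Set.range fun i => Pi.single i φ) ∪
      {v | ∃ j k : Fin n, j ≠ k ∧
        v = Pi.single k (pd j φ) - Pi.single j (pd k φ)})

open MvPowerSeries Finsupp

lemma fin2_decomp (e : Fin 2 →₀ ℕ) : e = single 0 (e 0) + single 1 (e 1) := by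
  ext j
  fin_cases j <;> simp [Finsupp.single_apply]

lemma add_single_eq_single_iff {N : ℕ} (i : Fin N) (nn : ℕ) (h1 : 1 ≤ nn) (e : Fin N →₀ ℕ) :
    e + single i 1 = single i nn ↔ e = single i (nn - 1) := by
  constructor
  · intro h
    have he : e = single i nn - single i 1 := eq_tsub_of_add_eq h
    rw [he]
    ext j
    simp [Finsupp.tsub_apply, Finsupp.single_apply]
  · rintro rfl
    rw [← Finsupp.single_add]
    congr 1
    omega

lemma pd_X_pow_same {N : ℕ} (i : Fin N) (nn : ℕ) (h1 : 1 ≤ nn) :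
    pd i ((X i : On N) ^ nn) = C (σ := Fin N) (R := ℂ) (nn : ℂ) * X i ^ (nn - 1) := by
  ext e
  show ((e i : ℂ) + 1) * coeff (R := ℂ) (e + single i 1) ((X i : On N) ^ nn)
      = coeff (R := ℂ) e (C (σ := Fin N) (R := ℂ) (nn : ℂ) * X i ^ (nn - 1))
  rw [coeff_C_mul, coeff_X_pow, coeff_X_pow]
  by_cases h : e = single i (nn - 1)
  · rw [if_pos ((add_single_eq_single_iff i nn h1 e).mpr h), if_pos h]
    subst h
    simp only [single_eq_same]
    push_cast [Nat.cast_sub h1]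
    ring
  · rw [if_neg (fun hc => h ((add_single_eq_single_iff i nn h1 e).mp hc)), if_neg h]
    ring

lemma pd_X_pow_ne {N : ℕ} (i j : Fin N) (hij : j ≠ i) (nn : ℕ) :
    pd j ((X i : On N) ^ nn) = 0 := by
  ext e
  show ((e j : ℂ) + 1) * coeff (R := ℂ) (e + single j 1) ((X i : On N) ^ nn) = _
  rw [coeff_X_pow, if_neg, mul_zero]
  · rfl
  · intro hc
    have := congrArg (fun m => m j) hc
    simp [Finsupp.single_apply, hij, (Ne.symm hij)] at this

lemma pd_sub {N : ℕ} (j : Fin N) (f g : On N) : pd j (f - g) = pd j f - pd j g := by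
  ext e
  show ((e j : ℂ) + 1) * coeff (R := ℂ) _ (f - g) = _
  rw [map_sub]
  show _ = ((e j : ℂ) + 1) * coeff (R := ℂ) _ f - ((e j : ℂ) + 1) * coeff (R := ℂ) _ g
  ring

lemma ev_apply2 (A ξ : Fin 2 → On 2) : ev A ξ = ξ 0 * A 0 + ξ 1 * A 1 := by
  simp [ev, Fintype.linearCombination_apply, Fin.sum_univ_two, smul_eq_mul]

lemma coeff_mul_X_pow'' (f : On 2) (s : Fin 2) (n : ℕ) (m : Fin 2 →₀ ℕ) :
    coeff (R := ℂ) m (f * X s ^ n) = if n ≤ m s then coeff (R := ℂ) (m - single s n) f else 0 := by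
  rw [X_pow_eq, coeff_mul_monomial]
  simp only [single_le_iff, mul_one]

lemma coeff_C_mul' (r : ℂ) (f : On 2) (m : Fin 2 →₀ ℕ) :
    coeff (R := ℂ) m (C (σ := Fin 2) (R := ℂ) r * f) = r * coeff (R := ℂ) m f := coeff_C_mul m f r

lemma X_pow_mul_inj (s : Fin 2) (n : ℕ) (u v : On 2) (h : u * X s ^ n = v * X s ^ n) :
    u = v := by
  ext m
  have h2 := congrArg (coeff (R := ℂ) (m + single s n)) h
  rw [coeff_mul_X_pow'', coeff_mul_X_pow''] at h2
  have hc : n ≤ (m + single s n) s := by simp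
  rw [if_pos hc, if_pos hc, add_tsub_cancel_right] at h2
  exact h2

def gg (p q : ℕ) (l : ℂ) : On 2 :=
  C (σ := Fin 2) (R := ℂ) (p : ℂ) * X 1 ^ p + C (σ := Fin 2) (R := ℂ) (l * q) * X 0 ^ q
def JJ (p q : ℕ) (l : ℂ) : Ideal (On 2) := Ideal.span {X 0 * X 1, gg p q l}

lemma pd0_phi (p q : ℕ) (hq : 1 ≤ q) :
    pd 0 ((X 1 : On 2) ^ p - X 0 ^ q) = -(C (σ := Fin 2) (R := ℂ) (q : ℂ) * X 0 ^ (q - 1)) := by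
  rw [pd_sub, pd_X_pow_ne 1 0 (by decide), pd_X_pow_same 0 q hq]
  ring

lemma pd1_phi (p q : ℕ) (hp : 1 ≤ p) :
    pd 1 ((X 1 : On 2) ^ p - X 0 ^ q) = C (σ := Fin 2) (R := ℂ) (p : ℂ) * X 1 ^ (p - 1) := by
  rw [pd_sub, pd_X_pow_ne 0 1 (by decide), pd_X_pow_same 1 p hp]
  ring

section main
variable (p q : ℕ) (hp : 2 ≤ p) (hq : 2 ≤ q) (l : ℂ) (hl : l ≠ 0)
  (hl' : (q : ℂ) * l + (p : ℂ) ≠ 0)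

-- Part 1a: J ⊆ image
lemma J_le_image (hp : 2 ≤ p) (hq : 2 ≤ q) (hl' : (q : ℂ) * l + (p : ℂ) ≠ 0) :
    JJ p q l ≤ Submodule.map
      (ev ![X 1, C (σ := Fin 2) (R := ℂ) l * X 0])
      (ThetaX ((X 1 : On 2) ^ p - X 0 ^ q)) := by
  have hp0 : (p : ℂ) ≠ 0 := Nat.cast_ne_zero.mpr (by omega)
  have hq0 : (q : ℂ) ≠ 0 := Nat.cast_ne_zero.mpr (by omega)
  have hx : (X 0 : On 2) ^ (q - 1) * X 0 = X 0 ^ q := by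
    rw [← pow_succ]; congr 1; omega
  have hy : (X 1 : On 2) ^ (p - 1) * X 1 = X 1 ^ p := by
    rw [← pow_succ]; congr 1; omega
  have hC : ∀ a b : ℂ, C (σ := Fin 2) (R := ℂ) a * C (σ := Fin 2) (R := ℂ) b = C (σ := Fin 2) (R := ℂ) (a * b) :=
    fun a b => (map_mul _ _ _).symm
  rw [JJ, Ideal.span_le]
  rintro f hf
  simp only [Set.mem_insert_iff, Set.mem_singleton_iff] at hf
  rcases hf with rfl | rfl
  · -- x*y in the image
    have hmem : (![C (σ := Fin 2) (R := ℂ) (p : ℂ) * X 0, C (σ := Fin 2) (R := ℂ) (q : ℂ) * X 1] : Fin 2 → On 2)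
        ∈ ThetaX ((X 1 : On 2) ^ p - X 0 ^ q) := by
      show ev _ _ ∈ Ideal.span _
      rw [ev_apply2]
      simp only [Matrix.cons_val_zero, Matrix.cons_val_one, Matrix.head_cons]
      rw [pd0_phi p q (by omega), pd1_phi p q (by omega)]
      rw [Ideal.mem_span_singleton]
      refine ⟨C (σ := Fin 2) (R := ℂ) ((p : ℂ) * q), ?_⟩
      have h1 := hC (p : ℂ) (q : ℂ)
      linear_combination (-(C (σ := Fin 2) (R := ℂ) (p:ℂ) * C (σ := Fin 2) (R := ℂ) (q:ℂ))) * hx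
        + (C (σ := Fin 2) (R := ℂ) (p:ℂ) * C (σ := Fin 2) (R := ℂ) (q:ℂ)) * hy
        + ((X 1 : On 2) ^ p - X 0 ^ q) * h1
    have him : C (σ := Fin 2) (R := ℂ) ((p : ℂ) + l * q) * (X 0 * X 1) ∈
        Submodule.map (ev ![X 1, C (σ := Fin 2) (R := ℂ) l * X 0])
          (ThetaX ((X 1 : On 2) ^ p - X 0 ^ q)) := by
      refine ⟨_, hmem, ?_⟩
      rw [ev_apply2]
      simp only [Matrix.cons_val_zero, Matrix.cons_val_one, Matrix.head_cons]
      have h1 : C (σ := Fin 2) (R := ℂ) ((p:ℂ) + l * q) = C (σ := Fin 2) (R := ℂ) (p:ℂ) + C (σ := Fin 2) (R := ℂ) l * C (σ := Fin 2) (R := ℂ) (q:ℂ) := by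
        rw [map_add, hC]
      linear_combination (-(X 0 * X 1) : On 2) * h1
    have h2 := Submodule.smul_mem _ (C (σ := Fin 2) (R := ℂ) ((p : ℂ) + l * q)⁻¹) him
    have he : C (σ := Fin 2) (R := ℂ) ((p:ℂ) + l * q)⁻¹ • (C (σ := Fin 2) (R := ℂ) ((p : ℂ) + l * q) * (X 0 * X 1))
        = X 0 * X 1 := by
      rw [smul_eq_mul, ← mul_assoc, hC, inv_mul_cancel₀ (by
        intro hcon; apply hl'; linear_combination hcon), map_one, one_mul]
    rwa [he] at h2
  · -- g in the image
    have hmem : (![C (σ := Fin 2) (R := ℂ) (p : ℂ) * X 1 ^ (p - 1),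
        C (σ := Fin 2) (R := ℂ) (q : ℂ) * X 0 ^ (q - 1)] : Fin 2 → On 2)
        ∈ ThetaX ((X 1 : On 2) ^ p - X 0 ^ q) := by
      show ev _ _ ∈ Ideal.span _
      rw [ev_apply2]
      simp only [Matrix.cons_val_zero, Matrix.cons_val_one, Matrix.head_cons]
      rw [pd0_phi p q (by omega), pd1_phi p q (by omega)]
      rw [Ideal.mem_span_singleton]
      exact ⟨0, by ring⟩
    refine ⟨_, hmem, ?_⟩
    rw [ev_apply2]
    simp only [Matrix.cons_val_zero, Matrix.cons_val_one, Matrix.head_cons]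
    rw [gg]
    rw [← hC l (q : ℂ)]
    linear_combination (C (σ := Fin 2) (R := ℂ) (p:ℂ)) * hy + (C (σ := Fin 2) (R := ℂ) l * C (σ := Fin 2) (R := ℂ) (q:ℂ)) * hx


set_option maxHeartbeats 1000000 in
lemma image_le_J (hp : 2 ≤ p) (hq : 2 ≤ q) :
    Submodule.map (ev ![X 1, C (σ := Fin 2) (R := ℂ) l * X 0])
      (ThetaX ((X 1 : On 2) ^ p - X 0 ^ q)) ≤ JJ p q l := by
  have hp0 : (p : ℂ) ≠ 0 := Nat.cast_ne_zero.mpr (by omega)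
  have hq0 : (q : ℂ) ≠ 0 := Nat.cast_ne_zero.mpr (by omega)
  have hx : (X 0 : On 2) ^ (q - 1) * X 0 = X 0 ^ q := by
    rw [← pow_succ]; congr 1; omega
  have hy : (X 1 : On 2) ^ (p - 1) * X 1 = X 1 ^ p := by
    rw [← pow_succ]; congr 1; omega
  have hC : ∀ a b : ℂ, C (σ := Fin 2) (R := ℂ) a * C (σ := Fin 2) (R := ℂ) b = C (σ := Fin 2) (R := ℂ) (a * b) :=
    fun a b => (map_mul _ _ _).symm
  have hq1 : C (σ := Fin 2) (R := ℂ) (q : ℂ) * C (σ := Fin 2) (R := ℂ) ((q : ℂ))⁻¹ = 1 := by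
    rw [hC, mul_inv_cancel₀ hq0, map_one]
  have hp1 : C (σ := Fin 2) (R := ℂ) (p : ℂ) * C (σ := Fin 2) (R := ℂ) ((p : ℂ))⁻¹ = 1 := by
    rw [hC, mul_inv_cancel₀ hp0, map_one]
  rintro f ⟨ξ, hξ, rfl⟩
  have hξ' : ev (fun i => pd i ((X 1 : On 2) ^ p - X 0 ^ q)) ξ ∈
      Ideal.span {(X 1 : On 2) ^ p - X 0 ^ q} := hξ
  rw [Ideal.mem_span_singleton] at hξ'
  obtain ⟨c, hc⟩ := hξ'
  rw [ev_apply2, pd0_phi p q (by omega), pd1_phi p q (by omega)] at hc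
  set a := ξ 0 with ha_def
  set b := ξ 1 with hb_def
  -- shifted fields
  set a' : On 2 := a - C (σ := Fin 2) (R := ℂ) ((q:ℂ))⁻¹ * c * X 0 with ha'
  set b' : On 2 := b - C (σ := Fin 2) (R := ℂ) ((p:ℂ))⁻¹ * c * X 1 with hb'
  have key : C (σ := Fin 2) (R := ℂ) (q:ℂ) * (a' * X 0 ^ (q-1)) = C (σ := Fin 2) (R := ℂ) (p:ℂ) * (b' * X 1 ^ (p-1)) := by
    rw [ha', hb']
    linear_combination (-1 : On 2) * hc + (-(c * X 0 ^ (q-1) * X 0)) * hq1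
      + (-c) * hx + (c * (X 1 ^ (p-1) * X 1)) * hp1 + c * hy
  -- a' is divisible by y^(p-1)
  have hdvd : (X 1 : On 2) ^ (p - 1) ∣ a' := by
    rw [X_pow_dvd_iff]
    intro m hm
    have h2 := congrArg (coeff (R := ℂ) (m + single 0 (q-1))) key
    rw [coeff_C_mul, coeff_C_mul, coeff_mul_X_pow'', coeff_mul_X_pow''] at h2
    have hc1 : q - 1 ≤ (m + single (0 : Fin 2) (q-1)) 0 := by
      rw [Finsupp.add_apply, Finsupp.single_apply]
      simp
    have hc2 : ¬ (p - 1 ≤ (m + single (0 : Fin 2) (q-1)) 1) := by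
      rw [Finsupp.add_apply, Finsupp.single_apply]
      simp only [if_neg (by decide : ¬ ((0 : Fin 2) = 1))]
      omega
    rw [if_pos hc1, if_neg hc2, add_tsub_cancel_right, mul_zero] at h2
    exact (mul_eq_zero.mp h2).resolve_left hq0
  obtain ⟨s, hs⟩ := hdvd
  rw [mul_comm] at hs
  -- b' = (q/p) x^(q-1) s
  have key2 : (C (σ := Fin 2) (R := ℂ) (q:ℂ) * (X 0 ^ (q-1) * s)) * X 1 ^ (p-1)
      = (C (σ := Fin 2) (R := ℂ) (p:ℂ) * b') * X 1 ^ (p-1) := by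
    rw [hs] at key
    linear_combination key
  have hb2 : C (σ := Fin 2) (R := ℂ) (q:ℂ) * (X 0 ^ (q-1) * s) = C (σ := Fin 2) (R := ℂ) (p:ℂ) * b' :=
    X_pow_mul_inj 1 (p-1) _ _ key2
  have hbb : b' = C (σ := Fin 2) (R := ℂ) ((p:ℂ))⁻¹ * C (σ := Fin 2) (R := ℂ) (q:ℂ) * (X 0 ^ (q-1) * s) := by
    linear_combination (-(C (σ := Fin 2) (R := ℂ) ((p:ℂ))⁻¹)) * hb2 + (-b') * hp1
  -- now the value of ω(ξ)
  rw [ev_apply2]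
  simp only [Matrix.cons_val_zero, Matrix.cons_val_one, Matrix.head_cons]
  rw [JJ, Ideal.mem_span_pair]
  refine ⟨C (σ := Fin 2) (R := ℂ) ((q:ℂ))⁻¹ * c + C (σ := Fin 2) (R := ℂ) l * C (σ := Fin 2) (R := ℂ) ((p:ℂ))⁻¹ * c,
    C (σ := Fin 2) (R := ℂ) ((p:ℂ))⁻¹ * s, ?_⟩
  have haa : a = X 1 ^ (p-1) * s + C (σ := Fin 2) (R := ℂ) ((q:ℂ))⁻¹ * c * X 0 := by
    linear_combination hs - ha'
  have hbbb : b = C (σ := Fin 2) (R := ℂ) ((p:ℂ))⁻¹ * C (σ := Fin 2) (R := ℂ) (q:ℂ) * (X 0 ^ (q-1) * s)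
      + C (σ := Fin 2) (R := ℂ) ((p:ℂ))⁻¹ * c * X 1 := by
    linear_combination hbb - hb'
  rw [gg]
  linear_combination (-(X 1) : On 2) * haa + (-(C (σ := Fin 2) (R := ℂ) l * X 0)) * hbbb
    + (s * X 1 ^ p) * hp1 + (-s) * hy
    + (-(C (σ := Fin 2) (R := ℂ) ((p:ℂ))⁻¹ * s * X 0 ^ q)) * (hC l (q:ℂ))
    + (-(C (σ := Fin 2) (R := ℂ) ((p:ℂ))⁻¹ * C (σ := Fin 2) (R := ℂ) l * C (σ := Fin 2) (R := ℂ) (q:ℂ) * s)) * hx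
end main

-- T : the functional map
def Tmap (p q : ℕ) (l : ℂ) : On 2 →ₗ[ℂ] (Fin q → ℂ) × (Fin (p-1) → ℂ) × ℂ :=
  (LinearMap.pi (fun i : Fin q => coeff (R := ℂ) (single (0 : Fin 2) (i:ℕ)))).prod
  ((LinearMap.pi (fun j : Fin (p-1) => coeff (R := ℂ) (single (1 : Fin 2) ((j:ℕ)+1)))).prod
    ((p : ℂ) • coeff (R := ℂ) (single (0 : Fin 2) q) - (l * q) • coeff (R := ℂ) (single (1 : Fin 2) p)))

lemma Tmap_apply (p q : ℕ) (l : ℂ) (f : On 2) :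
    Tmap p q l f = (fun i : Fin q => coeff (R := ℂ) (single (0 : Fin 2) (i:ℕ)) f,
      fun j : Fin (p-1) => coeff (R := ℂ) (single (1 : Fin 2) ((j:ℕ)+1)) f,
      (p : ℂ) * coeff (R := ℂ) (single (0 : Fin 2) q) f - l * q * coeff (R := ℂ) (single (1 : Fin 2) p) f) := rfl

lemma coeff_mul_C_Xpow (v : On 2) (r : ℂ) (s : Fin 2) (n : ℕ) (m : Fin 2 →₀ ℕ) :
    coeff (R := ℂ) m (v * (C (σ := Fin 2) (R := ℂ) r * X s ^ n))
      = if n ≤ m s then r * coeff (R := ℂ) (m - single s n) v else 0 := by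
  rw [show v * (C (σ := Fin 2) (R := ℂ) r * X s ^ n) = C (σ := Fin 2) (R := ℂ) r * (v * X s ^ n) by ring,
    coeff_C_mul, coeff_mul_X_pow'']
  split <;> simp

lemma coeff_mul_g (p q : ℕ) (l : ℂ) (v : On 2) (m : Fin 2 →₀ ℕ) :
    coeff (R := ℂ) m (v * gg p q l)
      = (if p ≤ m 1 then (p : ℂ) * coeff (R := ℂ) (m - single 1 p) v else 0)
        + (if q ≤ m 0 then l * q * coeff (R := ℂ) (m - single 0 q) v else 0) := by
  rw [gg, mul_add, map_add, coeff_mul_C_Xpow, coeff_mul_C_Xpow]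

lemma coeff_mul_xy (u : On 2) (m : Fin 2 →₀ ℕ) :
    coeff (R := ℂ) m (u * (X 0 * X 1 : On 2))
      = if 1 ≤ m 0 ∧ 1 ≤ m 1 then coeff (R := ℂ) (m - (single 0 1 + single 1 1)) u else 0 := by
  rw [show (X 0 * X 1 : On 2) = monomial (R := ℂ) (single 0 1 + single 1 1) 1 by
    rw [X_def, X_def, monomial_mul_monomial, mul_one]]
  rw [coeff_mul_monomial]
  have : (single (0:Fin 2) 1 + single 1 1 ≤ m) ↔ (1 ≤ m 0 ∧ 1 ≤ m 1) := by
    rw [Finsupp.le_def]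
    constructor
    · intro h
      refine ⟨?_, ?_⟩
      · have := h 0; simpa [Finsupp.add_apply, Finsupp.single_apply] using this
      · have := h 1; simpa [Finsupp.add_apply, Finsupp.single_apply] using this
    · intro ⟨h0, h1⟩ i
      fin_cases i <;> simp [Finsupp.add_apply, Finsupp.single_apply] <;> omega
  simp only [mul_one]
  exact if_congr this rfl rfl

section main2
variable (p q : ℕ) (l : ℂ)

lemma J_le_kerT (hp : 2 ≤ p) (hq : 2 ≤ q) :
    (JJ p q l).restrictScalars ℂ ≤ LinearMap.ker (Tmap p q l) := by
  intro f hf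
  rw [Submodule.restrictScalars_mem, JJ, Ideal.mem_span_pair] at hf
  obtain ⟨u, v, huv⟩ := hf
  rw [LinearMap.mem_ker, ← huv, map_add, Tmap_apply, Tmap_apply]
  have hxy : ∀ m : Fin 2 →₀ ℕ, (m 0 = 0 ∨ m 1 = 0) →
      coeff (R := ℂ) m (u * (X 0 * X 1 : On 2)) = 0 := by
    intro m hm
    rw [coeff_mul_xy, if_neg]
    rintro ⟨h0, h1⟩
    rcases hm with h | h <;> omega
  have hsx : ∀ k : ℕ, (single (0:Fin 2) k) 0 = k := fun k => by simp
  have hsx1 : ∀ k : ℕ, (single (0:Fin 2) k) 1 = 0 := fun k => by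
    rw [Finsupp.single_apply, if_neg (by decide)]
  have hsy : ∀ k : ℕ, (single (1:Fin 2) k) 1 = k := fun k => by simp
  have hsy0 : ∀ k : ℕ, (single (1:Fin 2) k) 0 = 0 := fun k => by
    rw [Finsupp.single_apply, if_neg (by decide)]
  have hgx : ∀ i : Fin q, coeff (R := ℂ) (single (0:Fin 2) (i:ℕ)) (v * gg p q l) = 0 := by
    intro i
    rw [coeff_mul_g, if_neg (by rw [hsx1]; omega), if_neg (by rw [hsx]; omega : ¬ q ≤ _)]
    ring
  have hgy : ∀ j : Fin (p-1), coeff (R := ℂ) (single (1:Fin 2) ((j:ℕ)+1)) (v * gg p q l) = 0 := by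
    intro j
    rw [coeff_mul_g, if_neg (by rw [hsy]; omega : ¬ p ≤ _), if_neg (by rw [hsy0]; omega)]
    ring
  have hgq : coeff (R := ℂ) (single (0:Fin 2) q) (v * gg p q l) = l * q * coeff (R := ℂ) 0 v := by
    rw [coeff_mul_g, if_neg (by rw [hsx1]; omega), if_pos (by rw [hsx] : q ≤ _)]
    simp
  have hgp : coeff (R := ℂ) (single (1:Fin 2) p) (v * gg p q l) = (p:ℂ) * coeff (R := ℂ) 0 v := by
    rw [coeff_mul_g, if_pos (by rw [hsy] : p ≤ _), if_neg (by rw [hsy0]; omega)]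
    simp
  refine Prod.ext ?_ (Prod.ext ?_ ?_)
  · funext i
    simp only [Prod.fst_add, Pi.add_apply]
    rw [hxy _ (Or.inr (hsx1 _)), hgx i]
    simp
  · funext j
    simp only [Prod.snd_add, Prod.fst_add, Pi.add_apply]
    rw [hxy _ (Or.inl (hsy0 _)), hgy j]
    simp
  · simp only [Prod.snd_add]
    rw [hxy _ (Or.inr (hsx1 _)), hxy _ (Or.inl (hsy0 _)), hgq, hgp]
    simp only [Prod.snd_zero]
    ring

set_option maxHeartbeats 1000000 in
lemma kerT_le_J (hp : 2 ≤ p) (hq : 2 ≤ q) (hl : l ≠ 0) :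
    LinearMap.ker (Tmap p q l) ≤ (JJ p q l).restrictScalars ℂ := by
  have hp0 : (p : ℂ) ≠ 0 := Nat.cast_ne_zero.mpr (by omega)
  have hq0 : (q : ℂ) ≠ 0 := Nat.cast_ne_zero.mpr (by omega)
  have hlq : l * (q:ℂ) ≠ 0 := mul_ne_zero hl hq0
  intro f hf
  rw [LinearMap.mem_ker, Tmap_apply, Prod.ext_iff, Prod.ext_iff] at hf
  obtain ⟨hf1, hf2, hf3⟩ := hf
  have hx0 : ∀ k, k < q → coeff (R := ℂ) (single (0:Fin 2) k) f = 0 := fun k hk => by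
    simpa using congrFun hf1 ⟨k, hk⟩
  have hy0 : ∀ k, k ≠ 0 → k < p → coeff (R := ℂ) (single (1:Fin 2) k) f = 0 := fun k h0 hkp => by
    have := congrFun hf2 ⟨k-1, by omega⟩
    simpa [show k-1+1 = k by omega] using this
  have h3 : (p:ℂ) * coeff (R := ℂ) (single (0:Fin 2) q) f
      = l * q * coeff (R := ℂ) (single (1:Fin 2) p) f := by
    have := hf3
    simp only [Prod.snd_zero] at this
    linear_combination this
  set h2f : On 2 := fun e =>
    if e 1 = 0 then coeff (R := ℂ) (e + single (0:Fin 2) q) f / (l*q)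
    else if e 0 = 0 then coeff (R := ℂ) (e + single (1:Fin 2) p) f / p
    else 0 with hh2f
  have hcoe : ∀ m : Fin 2 →₀ ℕ, coeff (R := ℂ) m h2f =
      (if m 1 = 0 then coeff (R := ℂ) (m + single (0:Fin 2) q) f / (l*q)
       else if m 0 = 0 then coeff (R := ℂ) (m + single (1:Fin 2) p) f / p
       else 0) := fun m => rfl
  have hs01 : ∀ k : ℕ, (single (0:Fin 2) k) 1 = 0 := fun k => by
    rw [Finsupp.single_apply, if_neg (by decide)]
  have hs10 : ∀ k : ℕ, (single (1:Fin 2) k) 0 = 0 := fun k => by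
    rw [Finsupp.single_apply, if_neg (by decide)]
  have hpure : ∀ e : Fin 2 →₀ ℕ, (e 0 = 0 ∨ e 1 = 0) →
      coeff (R := ℂ) e (f - h2f * gg p q l) = 0 := by
    intro e he
    rw [map_sub, coeff_mul_g]
    by_cases he1 : e 1 = 0
    · rw [if_neg (by omega)]
      by_cases heq : q ≤ e 0
      · rw [if_pos heq, hcoe]
        have hc1 : (e - single (0:Fin 2) q) 1 = 0 := by
          rw [Finsupp.tsub_apply, hs01]; omega
        rw [if_pos hc1, tsub_add_cancel_of_le (single_le_iff.mpr heq)]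
        field_simp
        ring
      · rw [if_neg heq]
        have he' : e = single (0:Fin 2) (e 0) := by
          conv_lhs => rw [fin2_decomp e]
          rw [he1]
          simp
        rw [he', hx0 (e 0) (by omega)]
        ring
    · have he0 : e 0 = 0 := he.resolve_right he1
      rw [if_neg (by omega : ¬ q ≤ e 0)]
      by_cases hep : p ≤ e 1
      · rw [if_pos hep, hcoe]
        by_cases hee : e 1 = p
        · have he' : e = single (1:Fin 2) p := by
            conv_lhs => rw [fin2_decomp e]
            rw [he0, hee]
            simp
          have hsub : e - single (1:Fin 2) p = 0 := by rw [he']; simp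
          rw [hsub]
          simp only [Finsupp.coe_zero, Pi.zero_apply, if_pos rfl, zero_add]
          rw [he']
          simp only [if_true]
          field_simp
          linear_combination -h3
        · have hc1 : ¬ ((e - single (1:Fin 2) p) 1 = 0) := by
            rw [Finsupp.tsub_apply, Finsupp.single_apply, if_pos rfl]; omega
          have hc0 : (e - single (1:Fin 2) p) 0 = 0 := by
            rw [Finsupp.tsub_apply, hs10]; omega
          rw [if_neg hc1, if_pos hc0, tsub_add_cancel_of_le (single_le_iff.mpr hep)]
          field_simp
          ring
      · rw [if_neg hep]
        have he' : e = single (1:Fin 2) (e 1) := by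
          conv_lhs => rw [fin2_decomp e]
          rw [he0]
          simp
        rw [he', hy0 (e 1) he1 (by omega)]
        ring
  have hxdvd : (X 0 : On 2) ∣ (f - h2f * gg p q l) :=
    X_dvd_iff.mpr (fun m hm => hpure m (Or.inl hm))
  obtain ⟨g1, hg1⟩ := hxdvd
  have hydvd : (X 1 : On 2) ∣ g1 := by
    rw [X_dvd_iff]
    intro m hm
    have h4 : coeff (R := ℂ) (m + single (0:Fin 2) 1) (f - h2f * gg p q l) = 0 := by
      refine hpure _ (Or.inr ?_)
      rw [Finsupp.add_apply, hs01]
      omega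
    rw [hg1, show (X 0 : On 2) * g1 = g1 * X 0 ^ 1 by ring, coeff_mul_X_pow''] at h4
    rw [if_pos (by rw [Finsupp.add_apply]; simp), add_tsub_cancel_right] at h4
    exact h4
  obtain ⟨h1f, hh1⟩ := hydvd
  rw [Submodule.restrictScalars_mem, JJ, Ideal.mem_span_pair]
  exact ⟨h1f, h2f, by linear_combination -hg1 - (X 0 : On 2) * hh1⟩

set_option maxHeartbeats 1000000 in
lemma Tmap_surj (hp : 2 ≤ p) (hq : 2 ≤ q) : Function.Surjective (Tmap p q l) := by
  have hp0 : (p : ℂ) ≠ 0 := Nat.cast_ne_zero.mpr (by omega)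
  rintro ⟨v, w, t⟩
  set F : On 2 := (∑ i : Fin q, v i • (X 0:On 2) ^ (i:ℕ))
      + ((∑ j : Fin (p-1), w j • (X 1:On 2) ^ ((j:ℕ)+1)) + (t/p) • (X 0:On 2)^q) with hF
  have hcross : ∀ a b : ℕ, b ≠ 0 → single (0:Fin 2) a ≠ single 1 b := by
    intro a b hb h
    have h1 : (single (0:Fin 2) a) 1 = (single (1:Fin 2) b) 1 := by rw [h]
    rw [Finsupp.single_apply, Finsupp.single_apply, if_neg (by decide), if_pos rfl] at h1
    omega
  have h00 : ∀ a b : ℕ, (single (0:Fin 2) a = single 0 b) ↔ a = b := by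
    intro a b
    constructor
    · intro h
      have := congrArg (fun m : Fin 2 →₀ ℕ => m 0) h
      simpa using this
    · rintro rfl; rfl
  have h11 : ∀ a b : ℕ, (single (1:Fin 2) a = single 1 b) ↔ a = b := by
    intro a b
    constructor
    · intro h
      have := congrArg (fun m : Fin 2 →₀ ℕ => m 1) h
      simpa using this
    · rintro rfl; rfl
  have hcF : ∀ m : Fin 2 →₀ ℕ, coeff (R := ℂ) m F
      = (∑ i : Fin q, v i * (if m = single 0 (i:ℕ) then 1 else 0))
      + ((∑ j : Fin (p-1), w j * (if m = single 1 ((j:ℕ)+1) then 1 else 0))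
        + t/p * (if m = single 0 q then 1 else 0)) := by
    intro m
    rw [hF]
    simp [map_add, map_sum, coeff_smul, coeff_X_pow]
  refine ⟨F, ?_⟩
  rw [Tmap_apply]
  refine Prod.ext ?_ (Prod.ext ?_ ?_)
  · funext i
    show coeff (R := ℂ) (single (0:Fin 2) (i:ℕ)) F = v i
    have hz1 : (∑ j : Fin (p-1), w j *
        (if single (0:Fin 2) (i:ℕ) = single 1 ((j:ℕ)+1) then (1:ℂ) else 0)) = 0 :=
      Finset.sum_eq_zero (fun j _ => by rw [if_neg (hcross _ _ (by omega))]; ring)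
    have hz2 : (∑ i' : Fin q, v i' *
        (if single (0:Fin 2) (i:ℕ) = single 0 ((i':ℕ)) then (1:ℂ) else 0)) = v i := by
      rw [Finset.sum_eq_single i
        (fun i' _ hne => by
          rw [if_neg (fun h => hne (Fin.ext ((h00 _ _).mp h).symm))]; ring)
        (fun h => absurd (Finset.mem_univ i) h), if_pos rfl]
      ring
    rw [hcF, hz1, hz2,
      if_neg (fun h => by have := (h00 _ _).mp h; have := i.isLt; omega)]
    ring
  · funext j
    show coeff (R := ℂ) (single (1:Fin 2) ((j:ℕ)+1)) F = w j
    have hz1 : (∑ i : Fin q, v i *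
        (if single (1:Fin 2) ((j:ℕ)+1) = single 0 ((i:ℕ)) then (1:ℂ) else 0)) = 0 :=
      Finset.sum_eq_zero (fun i _ => by
        rw [if_neg (fun h => hcross _ _ (by omega) h.symm)]; ring)
    have hz2 : (∑ j' : Fin (p-1), w j' *
        (if single (1:Fin 2) ((j:ℕ)+1) = single 1 ((j':ℕ)+1) then (1:ℂ) else 0)) = w j := by
      rw [Finset.sum_eq_single j
        (fun j' _ hne => by
          rw [if_neg (fun h => hne (Fin.ext (by have := (h11 _ _).mp h; omega)))]; ring)
        (fun h => absurd (Finset.mem_univ j) h), if_pos rfl]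
      ring
    rw [hcF, hz1, hz2, if_neg (fun h => hcross _ _ (by omega) h.symm)]
    ring
  · show (p:ℂ) * coeff (R := ℂ) (single (0:Fin 2) q) F - l * q * coeff (R := ℂ) (single (1:Fin 2) p) F = t
    have e1 : coeff (R := ℂ) (single (0:Fin 2) q) F = t/p := by
      have hz1 : (∑ i : Fin q, v i *
          (if single (0:Fin 2) q = single 0 ((i:ℕ)) then (1:ℂ) else 0)) = 0 :=
        Finset.sum_eq_zero (fun i _ => by
          rw [if_neg (fun h => by have := (h00 _ _).mp h; have := i.isLt; omega)]; ring)
      have hz2 : (∑ j : Fin (p-1), w j *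
          (if single (0:Fin 2) q = single 1 ((j:ℕ)+1) then (1:ℂ) else 0)) = 0 :=
        Finset.sum_eq_zero (fun j _ => by rw [if_neg (hcross _ _ (by omega))]; ring)
      rw [hcF, hz1, hz2, if_pos rfl]
      ring
    have e2 : coeff (R := ℂ) (single (1:Fin 2) p) F = 0 := by
      have hz1 : (∑ i : Fin q, v i *
          (if single (1:Fin 2) p = single 0 ((i:ℕ)) then (1:ℂ) else 0)) = 0 :=
        Finset.sum_eq_zero (fun i _ => by
          rw [if_neg (fun h => hcross _ _ (by omega) h.symm)]; ring)
      have hz2 : (∑ j : Fin (p-1), w j *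
          (if single (1:Fin 2) p = single 1 ((j:ℕ)+1) then (1:ℂ) else 0)) = 0 :=
        Finset.sum_eq_zero (fun j _ => by
          rw [if_neg (fun h => by have := (h11 _ _).mp h; have := j.isLt; omega)]; ring)
      rw [hcF, hz1, hz2, if_neg (fun h => hcross _ _ (by omega) h.symm)]
      ring
    rw [e1, e2]
    field_simp
    ring
end main2


/-- for `X = {yᵖ - x^q = 0}` (p,q ≥ 2 coprime) and the foliation
`ω = λx dy + y dx` with `λ ≠ 0`, `qλ + p ≠ 0`, the Bruce–Roberts number
`μ_BR(𝓕, X) = dim 𝓞₂/ω(Θ_X)` equals `p + q`. -/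
theorem stmt_8 (p q : ℕ) (hp : 2 ≤ p) (hq : 2 ≤ q) (hpq : Nat.Coprime p q)
    (l : ℂ) (hl : l ≠ 0) (hl' : (q : ℂ) * l + (p : ℂ) ≠ 0) :
    Module.finrank ℂ
      (On 2 ⧸ (Submodule.map
        (ev ![MvPowerSeries.X 1,
              MvPowerSeries.C (σ := Fin 2) (R := ℂ) l * MvPowerSeries.X 0])
        (ThetaX (MvPowerSeries.X 1 ^ p - MvPowerSeries.X 0 ^ q)) :
          Ideal (On 2))) = p + q := by
  have hJ : (Submodule.map
        (ev ![MvPowerSeries.X 1,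
              MvPowerSeries.C (σ := Fin 2) (R := ℂ) l * MvPowerSeries.X 0])
        (ThetaX (MvPowerSeries.X 1 ^ p - MvPowerSeries.X 0 ^ q)) :
          Ideal (On 2)) = JJ p q l :=
    le_antisymm (image_le_J p q l hp hq) (J_le_image p q l hp hq hl')
  rw [hJ]
  have hker : (JJ p q l).restrictScalars ℂ = LinearMap.ker (Tmap p q l) :=
    le_antisymm (J_le_kerT p q l hp hq) (kerT_le_J p q l hp hq hl)
  have E : (On 2 ⧸ JJ p q l) ≃ₗ[ℂ] ((Fin q → ℂ) × (Fin (p-1) → ℂ) × ℂ) :=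
    ((Submodule.Quotient.restrictScalarsEquiv ℂ (JJ p q l)).symm.trans
      (Submodule.quotEquivOfEq _ _ hker)).trans
      ((Tmap p q l).quotKerEquivOfSurjective (Tmap_surj p q l hp hq))
  rw [E.finrank_eq]
  rw [Module.finrank_prod, Module.finrank_prod, Module.finrank_pi, Module.finrank_pi,
    Module.finrank_self]
  simp only [Fintype.card_fin]
  omega
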